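/- If π is the inverse limit of a directed system of groups πᵢ and G is any group, then the canonical homomorphism from the free product π * G to the inverse limit of the system πᵢ * G is injective. -/

import Mathlib

open Monoid

namespace Stmt6Aux

universe u v u2

/-- The two-summand family used to realize a binary coproduct as an indexed coproduct. -/
def FB (A : Type u) (B : Type v) : Bool → Type (max u v)
  | true => ULift A
  | false => ULift B

instance (A : Type u) (B : Type v) [Group A] [Group B] : ∀ b, Group (FB A B b)
  | true => inferInstanceAs (Group (ULift A))
  | false => inferInstanceAs (Group (ULift B))

variable {A : Type u} {B : Type v} [Group A] [Group B]

def upHom (A : Type u) [Group A] : A →* ULift A :=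
  { toFun := ULift.up, map_one' := rfl, map_mul' := fun _ _ => rfl }

def downHom (A : Type u) [Group A] : ULift A →* A :=
  { toFun := ULift.down, map_one' := rfl, map_mul' := fun _ _ => rfl }

/-- `Coprod A B →* CoprodI (FB A B)`. -/
def toI (A : Type u) (B : Type v) [Group A] [Group B] : Coprod A B →* CoprodI (FB A B) :=
  Coprod.lift ((CoprodI.of (M := FB A B) (i := true)).comp (upHom A))
    ((CoprodI.of (M := FB A B) (i := false)).comp (upHom B))

def ofIFun (A : Type u) (B : Type v) [Group A] [Group B] :
    ∀ b, FB A B b →* Coprod A B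
  | true => Coprod.inl.comp (downHom A)
  | false => Coprod.inr.comp (downHom B)

def ofI (A : Type u) (B : Type v) [Group A] [Group B] : CoprodI (FB A B) →* Coprod A B :=
  CoprodI.lift (ofIFun A B)

theorem ofI_comp_toI : (ofI A B).comp (toI A B) = MonoidHom.id _ := by
  apply Coprod.hom_ext <;> ext x <;>
    simp only [ofI, toI, ofIFun, upHom, downHom, CoprodI.lift_of, MonoidHom.coe_mk, OneHom.coe_mk, MonoidHom.comp_apply, Coprod.lift_apply_inl, Coprod.lift_apply_inr, MonoidHom.id_apply] <;> rfl

theorem toI_comp_ofI : (toI A B).comp (ofI A B) = MonoidHom.id _ := by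
  apply CoprodI.ext_hom
  intro b
  cases b <;> ext x <;>
    simp only [ofI, toI, ofIFun, upHom, downHom, CoprodI.lift_of, MonoidHom.coe_mk, OneHom.coe_mk, MonoidHom.comp_apply, Coprod.lift_apply_inl, Coprod.lift_apply_inr, MonoidHom.id_apply] <;> rfl

theorem toI_injective : Function.Injective (toI A B) := by
  intro x y h
  have := congrArg (ofI A B) h
  simpa [← MonoidHom.comp_apply, ofI_comp_toI] using this

theorem ofI_injective : Function.Injective (ofI A B) := by
  intro x y h
  have := congrArg (toI A B) h
  simpa [← MonoidHom.comp_apply, toI_comp_ofI] using this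

variable {A' : Type u2} [Group A']

/-- The index-preserving family of maps induced by `h : A →* A'`. -/
def gmap (h : A →* A') : ∀ b, FB A B b →* FB A' B b
  | true => (upHom A').comp (h.comp (downHom A))
  | false => { toFun := fun x => ⟨x.down⟩, map_one' := rfl, map_mul' := fun _ _ => rfl }

/-- The induced map on indexed coproducts. -/
def mapI (h : A →* A') : CoprodI (FB A B) →* CoprodI (FB A' B) :=
  CoprodI.lift (fun b => (CoprodI.of (M := FB A' B) (i := b)).comp (gmap (B := B) h b))

theorem map_eq (h : A →* A') :
    Coprod.map h (MonoidHom.id B)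
      = ((ofI A' B).comp (mapI h)).comp (toI A B) := by
  apply Coprod.hom_ext <;> ext x <;>
    simp only [ofI, toI, mapI, ofIFun, gmap, upHom, downHom, CoprodI.lift_of, MonoidHom.coe_mk, OneHom.coe_mk, MonoidHom.comp_apply, Coprod.lift_apply_inl, Coprod.lift_apply_inr, MonoidHom.id_apply] <;> rfl

end Stmt6Aux

section Word

open Monoid.CoprodI

variable {ι : Type*} {M N : ι → Type*} [∀ i, Group (M i)] [∀ i, Group (N i)]

theorem prod_injective' : Function.Injective (Word.prod : Word M → Monoid.CoprodI M) := by
  classical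
  exact (Word.equiv (M := M)).symm.injective

theorem word_lift_ne_one (g : ∀ i, M i →* N i) (W : Word M)
    (hne : W.toList ≠ []) (h : ∀ l ∈ W.toList, g l.1 l.2 ≠ 1) :
    Monoid.CoprodI.lift (fun i => (of (M := N) (i := i)).comp (g i)) W.prod ≠ 1 := by
  classical
  let W' : Word N := ⟨W.toList.map (fun l => ⟨l.1, g l.1 l.2⟩), by
      intro l hl; rcases List.mem_map.1 hl with ⟨a, ha, rfl⟩; exact h a ha, by
      rw [List.isChain_map]; exact W.chain_ne.imp (fun a b hab => hab)⟩
  have hprod : Monoid.CoprodI.lift (fun i => (of (M := N) (i := i)).comp (g i)) W.prod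
      = W'.prod := by
    show _ = List.prod (W'.toList.map fun l => of l.snd)
    rw [Word.prod, map_list_prod, List.map_map]
    show _ = List.prod ((W.toList.map (fun l => (⟨l.1, g l.1 l.2⟩ : Σ i, N i))).map
      fun l => of l.snd)
    rw [List.map_map]
    exact congrArg List.prod (List.map_congr_left fun l _ => by
      simp [Function.comp, Monoid.CoprodI.lift_of])
  rw [hprod]
  intro hone
  have h1 : W' = Word.empty := prod_injective' (by rw [hone, Word.prod_empty])
  have h2 : W.toList.map (fun l => (⟨l.1, g l.1 l.2⟩ : Σ i, N i)) = [] :=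
    congrArg Word.toList h1
  exact hne (List.map_eq_nil_iff.1 h2)

theorem exists_ne_one_word (w : Monoid.CoprodI M) (hw : w ≠ 1) :
    ∃ W : Word M, W.prod = w ∧ W.toList ≠ [] := by
  classical
  refine ⟨Word.equiv w, (Word.equiv (M := M)).symm_apply_apply w, ?_⟩
  intro hnil
  apply hw
  have h1 : Word.equiv w = Word.empty := Word.ext hnil
  calc w = (Word.equiv (M := M)).symm (Word.equiv w) := ((Word.equiv (M := M)).symm_apply_apply w).symm
    _ = Word.empty.prod := by rw [h1]; rfl
    _ = 1 := Word.prod_empty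

end Word

/-- Common bound over a list in a directed order. -/
theorem exists_bound_list {I : Type*} [Preorder I] [IsDirected I (· ≤ ·)] [Nonempty I]
    {α : Type*} (Q : I → α → Prop) (mono : ∀ i j a, i ≤ j → Q i a → Q j a)
    (l : List α) (h : ∀ a ∈ l, ∃ i, Q i a) : ∃ i, ∀ a ∈ l, Q i a := by
  induction l with
  | nil => exact ⟨Classical.arbitrary I, by simp⟩
  | cons a l ih =>
    obtain ⟨i, hi⟩ := h a List.mem_cons_self
    obtain ⟨j, hj⟩ := ih (fun b hb => h b (List.mem_cons_of_mem a hb))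
    obtain ⟨k, hik, hjk⟩ := directed_of (· ≤ ·) i j
    refine ⟨k, ?_⟩
    intro b hb
    rcases List.mem_cons.1 hb with rfl | hb
    · exact mono i k b hik hi
    · exact mono j k b hjk (hj b hb)

theorem stmt_6 {I : Type*} [Preorder I] [IsDirected I (· ≤ ·)] [Nonempty I]
    (P : I → Type*) [∀ i, Group (P i)] (G π : Type*) [Group G] [Group π]
    (f : ∀ i j, i ≤ j → (P j →* P i))
    (hf : ∀ i j k (hij : i ≤ j) (hjk : j ≤ k),
      (f i j hij).comp (f j k hjk) = f i k (le_trans hij hjk))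
    (φ : ∀ i, π →* P i)
    (hcompat : ∀ i j (hij : i ≤ j), (f i j hij).comp (φ j) = φ i)
    (hinj : ∀ g : π, (∀ i, φ i g = 1) → g = 1) :
    Function.Injective (fun x : Monoid.Coprod π G =>
      fun i : I => Monoid.Coprod.map (φ i) (MonoidHom.id G) x) := by
  classical
  open Stmt6Aux Monoid in
  have key : ∀ x : Coprod π G, (∀ i, Coprod.map (φ i) (MonoidHom.id G) x = 1) → x = 1 := by
    intro x hx
    by_contra hx1
    set w : CoprodI (FB π G) := toI π G x with hw
    have hwne : w ≠ 1 := by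
      intro h1
      exact hx1 (toI_injective (by rw [← hw] at *; rw [h1, map_one]))
    obtain ⟨W, hWprod, hWnil⟩ := exists_ne_one_word w hwne
    have hex : ∀ l ∈ W.toList, ∃ i, gmap (A' := P i) (B := G) (φ i) l.1 l.2 ≠ 1 := by
      intro l hl
      rcases l with ⟨b, m⟩
      cases b with
      | true =>
        have hm : m ≠ 1 := W.ne_one _ hl
        have hm' : m.down ≠ 1 := fun h => hm (congrArg ULift.up h)
        obtain ⟨i, hi⟩ : ∃ i, φ i m.down ≠ 1 := by
          by_contra h; push_neg at h
          exact hm' (hinj m.down h)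
        refine ⟨i, fun hcontra => hi ?_⟩
        exact congrArg ULift.down hcontra
      | false =>
        have hm : m ≠ 1 := W.ne_one _ hl
        refine ⟨Classical.arbitrary I, fun hc => hm ?_⟩
        have h3 := hc
        simp only [gmap, MonoidHom.coe_mk, OneHom.coe_mk] at h3
        have hc2 := congrArg ULift.down h3
        exact congrArg ULift.up hc2
    have hmono : ∀ i j (l : Σ b, FB π G b), i ≤ j →
        gmap (A' := P i) (B := G) (φ i) l.1 l.2 ≠ 1 →
        gmap (A' := P j) (B := G) (φ j) l.1 l.2 ≠ 1 := by
      intro i j l hij hi hcontra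
      apply hi
      rcases l with ⟨b, m⟩
      cases b with
      | true =>
        have h1 : φ j m.down = 1 := by
          exact congrArg ULift.down hcontra
        have h2 : φ i m.down = 1 := by
          rw [← hcompat i j hij]; simp [h1]
        exact congrArg ULift.up h2
      | false =>
        have h3 := hcontra
        simp only [gmap, MonoidHom.coe_mk, OneHom.coe_mk] at h3
        have hc2 := congrArg ULift.down h3
        exact congrArg ULift.up hc2
    obtain ⟨i, hi⟩ := exists_bound_list
      (fun i (l : Σ b, FB π G b) => gmap (A' := P i) (B := G) (φ i) l.1 l.2 ≠ 1)
      (fun i j a hij h => hmono i j a hij h) W.toList hex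
    have hne : mapI (B := G) (φ i) w ≠ 1 := by
      rw [← hWprod]
      exact word_lift_ne_one (gmap (B := G) (φ i)) W hWnil hi
    apply hne
    have hxi := hx i
    rw [map_eq (B := G) (φ i)] at hxi
    simp only [MonoidHom.comp_apply] at hxi
    exact ofI_injective (by rw [← hw] at hxi; rw [hxi]; simp)
  intro x y h
  have hxy : x * y⁻¹ = 1 := by
    apply key
    intro i
    have hxyi := congrFun h i
    simp only at hxyi
    simp [map_mul, map_inv, hxyi]
  rwa [mul_inv_eq_one] at hxy
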